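/- Monotonicity of the Bernstein-represented KL in time: since the first forward differences Δc_k = c_{k+1} − c_k are averages of nonnegative one-step gains Δ_i(S), the function f(t) = Σ_{k=0}^D c_k binom(D,k) t^k(1−t)^{D−k} satisfies f'(t) ≥ 0 for all t ∈ [0,1]; i.e., KL(P_t ‖ Q_t) is nondecreasing along the masking process. -/

import Mathlib

open Finset
open scoped Classical

private lemma double_count (D : ℕ) (F : Finset (Fin D) → ℝ)
    (hMono : ∀ S T : Finset (Fin D), S ⊆ T → F S ≤ F T) (k : ℕ) :
    ((D - k : ℕ) : ℝ) * ∑ S ∈ Finset.univ.filter (fun S : Finset (Fin D) => S.card = k), F S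
      ≤ ((k + 1 : ℕ) : ℝ) *
        ∑ T ∈ Finset.univ.filter (fun T : Finset (Fin D) => T.card = k + 1), F T := by
  classical
  set A := Finset.univ.filter (fun S : Finset (Fin D) => S.card = k) with hA
  set B := Finset.univ.filter (fun T : Finset (Fin D) => T.card = k + 1) with hB
  have h1 : ((D - k : ℕ) : ℝ) * ∑ S ∈ A, F S = ∑ S ∈ A, ∑ _i ∈ Sᶜ, F S := by
    rw [Finset.mul_sum]
    refine Finset.sum_congr rfl fun S hS => ?_
    simp only [hA, Finset.mem_filter] at hS
    rw [Finset.sum_const, nsmul_eq_mul, Finset.card_compl, hS.2, Fintype.card_fin]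
  have h2 : ∑ S ∈ A, ∑ i ∈ Sᶜ, F S ≤ ∑ S ∈ A, ∑ i ∈ Sᶜ, F (insert i S) := by
    refine Finset.sum_le_sum fun S _ => Finset.sum_le_sum fun i _ => ?_
    exact hMono _ _ (Finset.subset_insert i S)
  have h3 : ∑ S ∈ A, ∑ i ∈ Sᶜ, F (insert i S) = ∑ T ∈ B, ∑ i ∈ T, F T := by
    rw [← Finset.sum_sigma A (fun S => Sᶜ) (fun p => F (insert p.2 p.1)),
        ← Finset.sum_sigma B (fun T => T) (fun p => F p.1)]
    refine Finset.sum_bij' (fun p hp => (⟨insert p.2 p.1, p.2⟩ : Σ _ : Finset (Fin D), Fin D))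
      (fun p hp => (⟨p.1.erase p.2, p.2⟩ : Σ _ : Finset (Fin D), Fin D)) ?_ ?_ ?_ ?_ ?_
    · rintro ⟨S, i⟩ hp
      simp only [hA, Finset.mem_sigma, Finset.mem_filter, Finset.mem_compl] at hp
      simp only [hB, Finset.mem_sigma, Finset.mem_filter, Finset.mem_univ, true_and]
      exact ⟨by rw [Finset.card_insert_of_notMem hp.2, hp.1.2], Finset.mem_insert_self _ _⟩
    · rintro ⟨T, i⟩ hp
      simp only [hB, Finset.mem_sigma, Finset.mem_filter, Finset.mem_univ, true_and] at hp
      simp only [hA, Finset.mem_sigma, Finset.mem_filter, Finset.mem_univ, true_and,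
        Finset.mem_compl]
      exact ⟨by rw [Finset.card_erase_of_mem hp.2, hp.1]; omega, Finset.notMem_erase _ _⟩
    · rintro ⟨S, i⟩ hp
      simp only [hA, Finset.mem_sigma, Finset.mem_filter, Finset.mem_compl] at hp
      simp [Finset.erase_insert hp.2]
    · rintro ⟨T, i⟩ hp
      simp only [hB, Finset.mem_sigma, Finset.mem_filter, Finset.mem_univ, true_and] at hp
      simp [Finset.insert_erase hp.2]
    · rintro ⟨S, i⟩ hp
      simp [Finset.mem_sigma] at hp ⊢
  have h4 : ∑ T ∈ B, ∑ _i ∈ T, F T = ((k + 1 : ℕ) : ℝ) * ∑ T ∈ B, F T := by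
    rw [Finset.mul_sum]
    refine Finset.sum_congr rfl fun T hT => ?_
    simp only [hB, Finset.mem_filter] at hT
    rw [Finset.sum_const, nsmul_eq_mul, hT.2]
  calc ((D - k : ℕ) : ℝ) * ∑ S ∈ A, F S = ∑ S ∈ A, ∑ _i ∈ Sᶜ, F S := h1
    _ ≤ ∑ S ∈ A, ∑ i ∈ Sᶜ, F (insert i S) := h2
    _ = ∑ T ∈ B, ∑ _i ∈ T, F T := h3
    _ = _ := h4

private lemma cmono (D : ℕ) (F : Finset (Fin D) → ℝ)
    (hMono : ∀ S T : Finset (Fin D), S ⊆ T → F S ≤ F T)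
    (c : ℕ → ℝ)
    (hc : ∀ k, c k = ((D.choose k : ℝ))⁻¹ *
      ∑ S ∈ Finset.univ.filter (fun S : Finset (Fin D) => S.card = k), F S)
    (DC : ∀ k, ((D - k : ℕ) : ℝ) *
        ∑ S ∈ Finset.univ.filter (fun S : Finset (Fin D) => S.card = k), F S
      ≤ ((k + 1 : ℕ) : ℝ) *
        ∑ T ∈ Finset.univ.filter (fun T : Finset (Fin D) => T.card = k + 1), F T)
    (k : ℕ) (hk : k < D) : c k ≤ c (k + 1) := by
  have h1 : (0:ℝ) < (D.choose k : ℝ) := by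
    exact_mod_cast Nat.choose_pos (le_of_lt hk)
  have h2 : (0:ℝ) < (D.choose (k+1) : ℝ) := by
    exact_mod_cast Nat.choose_pos hk
  have hid : ((D.choose (k+1) : ℕ) : ℝ) * ((k+1 : ℕ) : ℝ)
      = ((D.choose k : ℕ) : ℝ) * ((D - k : ℕ) : ℝ) := by
    exact_mod_cast congrArg (Nat.cast (R := ℝ)) (Nat.choose_succ_right_eq D k)
  have key := DC k
  rw [hc k, hc (k+1), inv_mul_eq_div, inv_mul_eq_div, div_le_div_iff₀ h1 h2]
  set Sk := ∑ S ∈ Finset.univ.filter (fun S : Finset (Fin D) => S.card = k), F S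
  set Sk1 := ∑ T ∈ Finset.univ.filter (fun T : Finset (Fin D) => T.card = k + 1), F T
  have hmul := mul_le_mul_of_nonneg_left key h1.le
  have hk1 : (0:ℝ) < ((k+1 : ℕ) : ℝ) := by positivity
  have e1 : ((k+1 : ℕ):ℝ) * (Sk * (D.choose (k+1) : ℝ)) = (D.choose k : ℝ) * (((D - k : ℕ):ℝ) * Sk) := by
    linear_combination Sk * hid
  have e2 : ((k+1 : ℕ):ℝ) * (Sk1 * (D.choose k : ℝ)) = (D.choose k : ℝ) * (((k+1 : ℕ):ℝ) * Sk1) := by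
    ring
  exact le_of_mul_le_mul_left (by rw [e1, e2]; exact hmul) hk1

/-- If `F` is a monotone nondecreasing set function (e.g. `F(S) = KL` of marginals with
masked set `S`), then the Bernstein polynomial with level-average coefficients
`c_k = binom(D,k)⁻¹ Σ_{|S|=k} F(S)` is nondecreasing on `[0,1]`: `f'(t) ≥ 0`. -/
theorem bernstein_kl_monotone_in_time
    (D : ℕ) (F : Finset (Fin D) → ℝ)
    (hMono : ∀ S T : Finset (Fin D), S ⊆ T → F S ≤ F T)
    (c : ℕ → ℝ)
    (hc : ∀ k, c k = ((D.choose k : ℝ))⁻¹ *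
      ∑ S ∈ Finset.univ.filter (fun S : Finset (Fin D) => S.card = k), F S) :
    ∀ t ∈ Set.Icc (0:ℝ) 1,
      0 ≤ deriv (fun s : ℝ => ∑ k ∈ Finset.range (D + 1),
            c k * (D.choose k : ℝ) * s ^ k * (1 - s) ^ (D - k)) t := by
  have hcm : ∀ k, k < D → c k ≤ c (k + 1) :=
    cmono D F hMono c hc (double_count D F hMono)

  intro t ht
  obtain ⟨ht0, ht1⟩ := ht
  have ht1' : (0:ℝ) ≤ 1 - t := by linarith
  set E : ℕ → ℝ := fun k =>
    c k * (D.choose k : ℝ) * ((k : ℝ) * t ^ (k - 1)) * (1 - t) ^ (D - k)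
      + c k * (D.choose k : ℝ) * t ^ k * (((D - k : ℕ) : ℝ) * (1 - t) ^ (D - k - 1) * (-1))
    with hE
  have hder : ∀ k ∈ Finset.range (D + 1),
      HasDerivAt (fun s : ℝ => c k * (D.choose k : ℝ) * s ^ k * (1 - s) ^ (D - k)) (E k) t := by
    intro k _
    have h1 : HasDerivAt (fun s : ℝ => c k * (D.choose k : ℝ) * s ^ k)
        (c k * (D.choose k : ℝ) * ((k : ℝ) * t ^ (k - 1))) t :=
      (hasDerivAt_pow k t).const_mul _
    have h2 : HasDerivAt (fun s : ℝ => (1 - s) ^ (D - k))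
        (((D - k : ℕ) : ℝ) * (1 - t) ^ (D - k - 1) * (-1)) t :=
      ((hasDerivAt_id t).const_sub 1).pow (D - k)
    exact h1.mul h2
  have hsum : HasDerivAt (fun s : ℝ => ∑ k ∈ Finset.range (D + 1),
      c k * (D.choose k : ℝ) * s ^ k * (1 - s) ^ (D - k))
      (∑ k ∈ Finset.range (D + 1), E k) t := HasDerivAt.fun_sum hder
  rw [hsum.deriv]
  -- split the sum into two parts
  have hsplit : ∑ k ∈ Finset.range (D + 1), E k
      = ∑ j ∈ Finset.range D,
          (c (j+1) * (D.choose (j+1) : ℝ) * (((j+1 : ℕ) : ℝ) * t ^ j) * (1 - t) ^ (D - (j+1))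
            - c j * (D.choose j : ℝ) * t ^ j * (((D - j : ℕ) : ℝ) * (1 - t) ^ (D - j - 1))) := by
    have hA : ∑ k ∈ Finset.range (D + 1),
        c k * (D.choose k : ℝ) * ((k : ℝ) * t ^ (k - 1)) * (1 - t) ^ (D - k)
        = ∑ j ∈ Finset.range D,
          c (j+1) * (D.choose (j+1) : ℝ) * (((j+1 : ℕ) : ℝ) * t ^ j) * (1 - t) ^ (D - (j+1)) := by
      rw [Finset.sum_range_succ']
      simp
    have hB : ∑ k ∈ Finset.range (D + 1),
        c k * (D.choose k : ℝ) * t ^ k * (((D - k : ℕ) : ℝ) * (1 - t) ^ (D - k - 1) * (-1))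
        = ∑ j ∈ Finset.range D,
          -(c j * (D.choose j : ℝ) * t ^ j * (((D - j : ℕ) : ℝ) * (1 - t) ^ (D - j - 1))) := by
      rw [Finset.sum_range_succ]
      simp [mul_comm]
    simp only [hE, Finset.sum_add_distrib, hA, hB]
    rw [← Finset.sum_add_distrib]
    apply Finset.sum_congr rfl
    intro j _
    ring
  rw [hsplit]
  apply Finset.sum_nonneg
  intro j hj
  have hjD : j < D := Finset.mem_range.mp hj
  have hcc : ((D.choose (j+1) : ℕ) : ℝ) * ((j+1 : ℕ) : ℝ)
      = ((D.choose j : ℕ) : ℝ) * ((D - j : ℕ) : ℝ) := by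
    exact_mod_cast congrArg (Nat.cast (R := ℝ)) (Nat.choose_succ_right_eq D j)
  have hsub : D - (j+1) = D - j - 1 := by omega
  rw [hsub]
  have hkey : c (j+1) * (D.choose (j+1) : ℝ) * (((j+1 : ℕ) : ℝ) * t ^ j) * (1 - t) ^ (D - j - 1)
      - c j * (D.choose j : ℝ) * t ^ j * (((D - j : ℕ) : ℝ) * (1 - t) ^ (D - j - 1))
      = ((D.choose j : ℕ) : ℝ) * ((D - j : ℕ) : ℝ) * (t ^ j * (1 - t) ^ (D - j - 1))
          * (c (j+1) - c j) := by
    linear_combination (c (j+1) * t ^ j * (1 - t) ^ (D - j - 1)) * hcc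
  rw [hkey]
  have h1 : (0:ℝ) ≤ ((D.choose j : ℕ) : ℝ) * ((D - j : ℕ) : ℝ) := by positivity
  have h2 : (0:ℝ) ≤ t ^ j * (1 - t) ^ (D - j - 1) := by positivity
  have h3 : (0:ℝ) ≤ c (j+1) - c j := by linarith [hcm j hjD]
  positivity
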